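/- In SU(1,1) with H = diag(-√15, 1) over E = ℚ(√15, i), the matrix g = √(4+√15)·[[2,1],[√15,2]] satisfies g*Hg = H, det(g) = 1, and g² has entries in the ring of integers of E, yet Tr(g) = 4√(4+√15) ∉ E. -/
import Mathlib

open Matrix Complex

noncomputable def Hmat : Matrix (Fin 2) (Fin 2) ℂ :=
  !![-(Real.sqrt 15 : ℂ), 0; 0, 1]

noncomputable def gmat : Matrix (Fin 2) (Fin 2) ℂ :=
  (Real.sqrt (4 + Real.sqrt 15) : ℂ) • !![2, 1; (Real.sqrt 15 : ℂ), 2]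

/-- The field E = ℚ(√15, i) as a subfield of ℂ. -/
noncomputable def Efield : Subfield ℂ :=
  Subfield.closure {(Real.sqrt 15 : ℂ), Complex.I}

/-- basis representation predicate -/
def InS (z : ℂ) : Prop :=
  ∃ a b c d : ℚ, z = (a : ℂ) + (b : ℂ) * (Real.sqrt 15 : ℂ) + (c : ℂ) * Complex.I
    + (d : ℂ) * ((Real.sqrt 15 : ℂ) * Complex.I)

lemma hsC : ((Real.sqrt 15 : ℝ) : ℂ) ^ 2 = 15 := by
  rw [← Complex.ofReal_pow, Real.sq_sqrt (by norm_num : (0:ℝ) ≤ 15)]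
  norm_num

lemma InS_mul {z w : ℂ} (hz : InS z) (hw : InS w) : InS (z * w) := by
  obtain ⟨a, b, c, d, rfl⟩ := hz
  obtain ⟨a', b', c', d', rfl⟩ := hw
  refine ⟨a*a' + 15*b*b' - c*c' - 15*d*d', a*b' + b*a' - c*d' - d*c',
    a*c' + c*a' + 15*b*d' + 15*d*b', a*d' + d*a' + b*c' + c*b', ?_⟩
  have hI : (Complex.I)^2 = -1 := Complex.I_sq
  push_cast
  linear_combination ((b:ℂ)*b' - d*d' + ((b:ℂ)*d' + b'*d)*Complex.I) * hsC
    + (((c:ℂ)+d*(Real.sqrt 15:ℂ))*((c':ℂ)+d'*(Real.sqrt 15:ℂ))) * hI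

unseal Nat.sqrt.iter in
lemma not_sq_15 : ¬ IsSquare (15:ℕ) := by decide

unseal Nat.sqrt.iter in
lemma not_sq_6 : ¬ IsSquare (6:ℕ) := by decide

unseal Nat.sqrt.iter in
lemma not_sq_10 : ¬ IsSquare (10:ℕ) := by decide

lemma irr15 : Irrational (Real.sqrt 15) := by
  rw [show (15:ℝ) = ((15:ℕ):ℝ) by norm_num, irrational_sqrt_natCast_iff]
  exact not_sq_15

lemma rat_indep (p q : ℚ) (h : (p:ℝ) + q * Real.sqrt 15 = 0) : p = 0 ∧ q = 0 := by
  rcases eq_or_ne q 0 with hq | hq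
  · subst hq; simp at h; exact ⟨by exact_mod_cast h, rfl⟩
  · exfalso
    have : Real.sqrt 15 = ((-p/q : ℚ) : ℝ) := by
      push_cast
      field_simp
      linarith [h]
    exact irr15 ⟨-p/q, this.symm⟩

lemma mem_E_imp {z : ℂ} (hz : z ∈ Efield) : InS z := by
  induction hz using Subfield.closure_induction with
  | mem x hx =>
    rcases hx with hx | hx
    · exact ⟨0, 1, 0, 0, by simp [hx]⟩
    · exact ⟨0, 0, 1, 0, by simp [Set.mem_singleton_iff.mp hx]⟩
  | one => exact ⟨1, 0, 0, 0, by simp⟩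
  | add x y hx hy ihx ihy =>
    obtain ⟨a, b, c, d, rfl⟩ := ihx
    obtain ⟨a', b', c', d', rfl⟩ := ihy
    exact ⟨a+a', b+b', c+c', d+d', by push_cast; ring⟩
  | neg x hx ihx =>
    obtain ⟨a, b, c, d, rfl⟩ := ihx
    exact ⟨-a, -b, -c, -d, by push_cast; ring⟩
  | mul x y hx hy ihx ihy => exact InS_mul ihx ihy
  | inv x hx ihx =>
    obtain ⟨a, b, c, d, rfl⟩ := ihx
    set s : ℝ := Real.sqrt 15 with hsdef
    rcases eq_or_ne ((a:ℂ) + b * (s:ℂ) + c * Complex.I + d * ((s:ℂ) * Complex.I)) 0 with h0 | h0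
    · rw [h0]; exact ⟨0, 0, 0, 0, by simp⟩
    · set x : ℂ := (a:ℂ) + b * (s:ℂ) + c * Complex.I + d * ((s:ℂ) * Complex.I) with hxdef
      set A : ℚ := a^2 + 15*b^2 + c^2 + 15*d^2 with hA
      set B : ℚ := 2*a*b + 2*c*d with hB
      have hconj : (starRingEnd ℂ) x = (a:ℂ) + b * (s:ℂ) - c * Complex.I - d * ((s:ℂ) * Complex.I) := by
        rw [hxdef]
        simp [map_add, _root_.map_mul, Complex.conj_I, Complex.conj_ofReal]
        ring
      have hmulconj : x * (starRingEnd ℂ) x = (A:ℂ) + (B:ℂ) * (s:ℂ) := by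
        rw [hconj, hxdef, hA, hB]
        push_cast
        have hI : (Complex.I)^2 = -1 := Complex.I_sq
        linear_combination ((b:ℂ)^2 + (d:ℂ)^2) * hsC - (((c:ℂ)+(d:ℂ)*(s:ℂ))^2) * hI
      have hnormSq : (Complex.normSq x : ℝ) = (A:ℝ) + B * s := by
        have h1 : ((Complex.normSq x : ℝ) : ℂ) = (A:ℂ) + (B:ℂ) * (s:ℂ) := by
          rw [← Complex.mul_conj, hmulconj]
        have h2 : ((Complex.normSq x : ℝ) : ℂ) = (((A:ℝ) + B * s : ℝ) : ℂ) := by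
          rw [h1]; push_cast; ring
        exact_mod_cast h2
      have hpos : (0:ℝ) < (A:ℝ) + B * s := by
        rw [← hnormSq]; exact Complex.normSq_pos.mpr h0
      set N : ℚ := A^2 - 15*B^2 with hN
      have hs2 : s^2 = 15 := Real.sq_sqrt (by norm_num)
      have hfac : (N:ℝ) = ((A:ℝ) + B * s) * ((A:ℝ) - B * s) := by
        rw [hN]; push_cast; linear_combination ((B:ℝ)^2) * hs2
      have hNne : (N:ℝ) ≠ 0 := by
        rw [hfac]
        apply mul_ne_zero (ne_of_gt hpos)
        intro h
        rcases eq_or_ne B 0 with hB0 | hB0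
        · rw [hB0] at h hpos
          simp at h hpos
          rw [h] at hpos; simp at hpos
        · have : s = ((A/B : ℚ):ℝ) := by
            push_cast
            field_simp
            linarith [h]
          exact irr15 ⟨A/B, this.symm⟩
      have hNQ : N ≠ 0 := by exact_mod_cast hNne
      have hrinv : ((A:ℝ) + B*s)⁻¹ = ((A:ℝ) - B*s)/(N:ℝ) := by
        rw [eq_div_iff hNne, inv_mul_eq_div, div_eq_iff (ne_of_gt hpos), hfac]
        ring
      have hinv : x⁻¹ = (starRingEnd ℂ) x * ((((A:ℝ) - B*s)/(N:ℝ) : ℝ) : ℂ) := by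
        rw [Complex.inv_def, hnormSq, hrinv]
      rw [hinv]
      exact InS_mul ⟨a, b, -c, -d, by rw [hconj]; push_cast; ring⟩
        ⟨A/N, -(B/N), 0, 0, by rw [hsdef]; push_cast; field_simp; ring⟩

lemma no_rat_sq {n : ℕ} (h : ¬ IsSquare n) (q : ℚ) : q^2 ≠ (n:ℚ) := by
  intro hq
  have h1 : Irrational (Real.sqrt n) := irrational_sqrt_natCast_iff.2 h
  have h2 : Real.sqrt n = |(q:ℝ)| := by
    rw [show ((n:ℕ):ℝ) = ((q:ℝ))^2 by exact_mod_cast hq.symm, Real.sqrt_sq_eq_abs]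
  rw [h2] at h1
  exact (Rat.not_irrational |q|) (by rwa [← Rat.cast_abs] at h1)

lemma t_not_in_E : ((Real.sqrt (4 + Real.sqrt 15) : ℝ) : ℂ) ∉ Efield := by
  intro hmem
  obtain ⟨a, b, c, d, heq⟩ := mem_E_imp hmem
  set s : ℝ := Real.sqrt 15 with hsdef
  set t : ℝ := Real.sqrt (4 + s) with htdef
  -- real part equation
  have hre : t = (a:ℝ) + b * s := by
    have := congrArg Complex.re heq
    simpa using this
  have hs2 : s^2 = 15 := Real.sq_sqrt (by norm_num)
  have ht2 : t^2 = 4 + s := Real.sq_sqrt (by positivity)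
  rw [hre] at ht2
  -- (a²+15b²-4) + (2ab-1) s = 0
  have key : ((a^2 + 15*b^2 - 4 : ℚ):ℝ) + ((2*a*b - 1 : ℚ):ℝ) * s = 0 := by
    push_cast
    linear_combination ht2 - (b:ℝ)^2 * hs2
  obtain ⟨h1, h2⟩ := rat_indep _ _ key
  have h1' : a^2 + 15*b^2 = 4 := by linarith [sub_eq_zero.mp (by linarith [h1] : (a^2+15*b^2-4 : ℚ) = 0)]
  have h2' : 2*a*b = 1 := by linarith [h2]
  have hquartic : (2*a^2 - 3) * (2*a^2 - 5) = 0 := by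
    nlinarith [h1', h2', sq_nonneg a, sq_nonneg b]
  rcases mul_eq_zero.mp hquartic with h | h
  · exact no_rat_sq (n := 6) not_sq_6 (2*a) (by push_cast; nlinarith [h])
  · exact no_rat_sq (n := 10) not_sq_10 (2*a) (by push_cast; nlinarith [h])

theorem arithmetic_trace_not_in_E :
    gmatᴴ * Hmat * gmat = Hmat
    ∧ gmat.det = 1
    ∧ (∀ i j, (gmat * gmat) i j ∈ Efield ∧ IsIntegral ℤ ((gmat * gmat) i j))
    ∧ gmat.trace = 4 * (Real.sqrt (4 + Real.sqrt 15) : ℂ)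
    ∧ gmat.trace ∉ Efield := by
  have hs2 : ((Real.sqrt 15 : ℝ) : ℂ) ^ 2 = 15 := hsC
  have ht2 : ((Real.sqrt (4 + Real.sqrt 15) : ℝ) : ℂ)^2 = 4 + ((Real.sqrt 15 : ℝ) : ℂ) := by
    rw [← Complex.ofReal_pow, Real.sq_sqrt (by positivity)]
    push_cast; ring
  have hsE : ((Real.sqrt 15 : ℝ) : ℂ) ∈ Efield := Subfield.subset_closure (by left; rfl)
  have htrace : gmat.trace = 4 * (Real.sqrt (4 + Real.sqrt 15) : ℂ) := by
    simp [Matrix.trace, gmat, Fin.sum_univ_two, Matrix.diag]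
    ring
  refine ⟨?_, ?_, ?_, htrace, ?_⟩
  · ext i j
    fin_cases i <;> fin_cases j
    · simp [Hmat, gmat, Matrix.mul_apply, Fin.sum_univ_two, Matrix.conjTranspose_apply,
        Complex.conj_ofReal, map_ofNat]
      linear_combination (((Real.sqrt (4 + Real.sqrt 15) : ℝ):ℂ)^2 - 4) * hs2
        + (15 - 4*((Real.sqrt 15 : ℝ):ℂ)) * ht2
    · simp [Hmat, gmat, Matrix.mul_apply, Fin.sum_univ_two, Matrix.conjTranspose_apply,
        Complex.conj_ofReal, map_ofNat]
      ring
    · simp [Hmat, gmat, Matrix.mul_apply, Fin.sum_univ_two, Matrix.conjTranspose_apply,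
        Complex.conj_ofReal, map_ofNat]
      ring
    · simp [Hmat, gmat, Matrix.mul_apply, Fin.sum_univ_two, Matrix.conjTranspose_apply,
        Complex.conj_ofReal, map_ofNat]
      linear_combination (4 - ((Real.sqrt 15 : ℝ):ℂ)) * ht2 - hs2
  · simp [Matrix.det_fin_two, gmat]
    linear_combination (4 - ((Real.sqrt 15 : ℝ):ℂ)) * ht2 - hs2
  · have hint : IsIntegral ℤ ((Real.sqrt 15 : ℝ):ℂ) := by
      refine ⟨Polynomial.X^2 - Polynomial.C 15, Polynomial.monic_X_pow_sub_C 15 (by norm_num), ?_⟩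
      simp
      linear_combination hs2
    have hZ : ∀ n : ℤ, IsIntegral ℤ ((n:ℤ):ℂ) := fun n => by
      have h := isIntegral_algebraMap (R := ℤ) (A := ℂ) (x := n)
      rwa [algebraMap_int_eq, eq_intCast] at h
    have entries : ∀ i j, ∃ p q : ℤ, (gmat*gmat) i j = (p:ℂ) + (q:ℂ)*((Real.sqrt 15 : ℝ):ℂ) := by
      intro i j
      fin_cases i <;> fin_cases j
      · refine ⟨31, 8, ?_⟩
        simp [gmat, Matrix.mul_apply, Fin.sum_univ_two]
        linear_combination (4 + ((Real.sqrt 15 : ℝ):ℂ)) * ht2 + hs2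
      · refine ⟨16, 4, ?_⟩
        simp [gmat, Matrix.mul_apply, Fin.sum_univ_two]
        linear_combination (4:ℂ) * ht2
      · refine ⟨60, 16, ?_⟩
        simp [gmat, Matrix.mul_apply, Fin.sum_univ_two]
        linear_combination (4*((Real.sqrt 15 : ℝ):ℂ)) * ht2 + 4 * hs2
      · refine ⟨31, 8, ?_⟩
        simp [gmat, Matrix.mul_apply, Fin.sum_univ_two]
        linear_combination (4 + ((Real.sqrt 15 : ℝ):ℂ)) * ht2 + hs2
    intro i j
    obtain ⟨p, q, h⟩ := entries i j
    rw [h]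
    refine ⟨add_mem (intCast_mem Efield p) (mul_mem (intCast_mem Efield q) hsE), ?_⟩
    exact (hZ p).add ((hZ q).mul hint)
  · intro h
    rw [htrace] at h
    have h4 : ((4:ℚ):ℂ) ∈ Efield := SubfieldClass.ratCast_mem Efield 4
    have ht : ((Real.sqrt (4 + Real.sqrt 15) : ℝ):ℂ) ∈ Efield := by
      have := mul_mem (inv_mem h4) h
      have e : ((4:ℚ):ℂ)⁻¹ * (4 * (Real.sqrt (4 + Real.sqrt 15) : ℂ))
          = ((Real.sqrt (4 + Real.sqrt 15) : ℝ):ℂ) := by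
        push_cast; ring
      rwa [e] at this
    exact t_not_in_E ht
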